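/- Suppose $(W_t)_{t\ge 0}$ is a continuous-time Markov jump process on a countable state space with bounded jump rates, taking values in $\mathbb{N}\cup\{\infty\}$, whose generator $L$ satisfies $LW(\eta)\ge c>0$ for all states $\eta$ with $W(\eta)<\infty$ in a given class. If moreover all jumps change $W$ by a bounded amount and the total jump rate is bounded, then there exists $\epsilon>0$ such that $1-(1-\epsilon)^{W_t}$ is a submartingale. -/

import Mathlib

/-- `1 - (1-ε)^w` for `w ∈ ℕ ∪ {∞}`, with the convention `(1-ε)^∞ = 0`. -/
noncomputable def expWeight (ε : ℝ) (w : ℕ∞) : ℝ :=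
  if w = ⊤ then 1 else 1 - (1 - ε) ^ (WithTop.untopD 0 w)

/-- The real value of a weight in `ℕ ∪ {∞}` (with junk value `0` at `∞`). -/
noncomputable def weightReal (w : ℕ∞) : ℝ := (WithTop.untopD 0 w : ℕ)

/-- Consider a continuous-time Markov jump process on a countable state space `S` with
jump rates `q`, total jump rate bounded by `R`, and a weight function `W : S → ℕ ∪ {∞}`
whose jumps are bounded by `M` and whose generator drift satisfies `L W ≥ c > 0` on a
class `C` of states with finite weight.  Then there is `ε ∈ (0,1)` such that the
generator applied to `1 - (1-ε)^W` is nonnegative on that class, i.e.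
`1 - (1-ε)^{W_t}` is a submartingale for the process stopped on leaving the class. -/
lemma pow_lower (ε : ℝ) (hε1 : ε ≤ 2) (d : ℕ) : 1 - (d:ℝ)*ε ≤ (1-ε)^d := by
  have := one_add_mul_le_pow (a := -ε) (by linarith) d
  calc 1 - (d:ℝ)*ε = 1 + d*(-ε) := by ring
  _ ≤ (1 + -ε)^d := this
  _ = (1-ε)^d := by ring_nf

lemma pow_upper (ε : ℝ) (h0 : 0 ≤ ε) (h1 : ε ≤ 1) :
    ∀ d : ℕ, (1-ε)^d ≤ 1 - (d:ℝ)*ε + (d:ℝ)^2*ε^2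
  | 0 => by simp
  | d+1 => by
    have ih := pow_upper ε h0 h1 d
    have hx : 0 ≤ 1 - ε := by linarith
    have hd0 : (0:ℝ) ≤ d := Nat.cast_nonneg d
    calc (1-ε)^(d+1) = (1-ε)^d * (1-ε) := by ring
    _ ≤ (1 - (d:ℝ)*ε + (d:ℝ)^2*ε^2)*(1-ε) := by
        apply mul_le_mul_of_nonneg_right ih hx
    _ ≤ 1 - ((d:ℕ)+1:ℝ)*ε + (((d:ℕ):ℝ)+1)^2*ε^2 := by
        nlinarith [sq_nonneg ε, mul_nonneg (mul_nonneg hd0 hd0) (mul_nonneg (mul_nonneg h0 h0) h0)]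
    _ = 1 - ((d+1:ℕ):ℝ)*ε + ((d+1:ℕ):ℝ)^2*ε^2 := by push_cast; ring

lemma key_ineq (M : ℕ) (hM : 1 ≤ M) (ε : ℝ) (hε0 : 0 < ε) (hε2M : ε * (2*M) ≤ 1)
    (a b : ℕ) (hab : b ≤ a + M) (hba : a ≤ b + M) :
    (1-ε)^a * (ε * ((b:ℝ) - a) - 2*(M:ℝ)^2*ε^2) ≤ (1-ε)^a - (1-ε)^b := by
  have hM1 : (1:ℝ) ≤ M := by exact_mod_cast hM
  have hε1 : ε ≤ 1 := by nlinarith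
  have hx : 0 ≤ 1 - ε := by linarith
  rcases le_or_gt a b with h | h
  · obtain ⟨d, rfl⟩ := Nat.exists_eq_add_of_le h
    have hdM : (d:ℝ) ≤ M := by exact_mod_cast (by omega : d ≤ M)
    have hxa : 0 ≤ (1-ε)^a := pow_nonneg hx a
    have hup := pow_upper ε hε0.le hε1 d
    have hd2 : (d:ℝ)^2 ≤ (M:ℝ)^2 := by nlinarith [Nat.cast_nonneg (α := ℝ) d]
    have hcore : ε * ((d:ℝ)) - 2*(M:ℝ)^2*ε^2 ≤ 1 - (1-ε)^d := by
      nlinarith [mul_le_mul_of_nonneg_right hd2 (sq_nonneg ε), hup]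
    have := mul_le_mul_of_nonneg_left hcore hxa
    rw [pow_add]
    push_cast
    nlinarith [this]
  · obtain ⟨e, rfl⟩ := Nat.exists_eq_add_of_le h.le
    have heM : (e:ℝ) ≤ M := by exact_mod_cast (by omega : e ≤ M)
    have he0 : (0:ℝ) ≤ e := Nat.cast_nonneg e
    have hxb : 0 ≤ (1-ε)^b := pow_nonneg hx b
    have hlo := pow_lower ε (by linarith) e
    have hye : 0 ≤ (1-ε)^e := pow_nonneg hx e
    -- core: 1 - (1-ε)^e ≤ (1-ε)^e * (ε*e + 2M²ε²)
    have hcore : 1 - (1-ε)^e ≤ (1-ε)^e * (ε*(e:ℝ) + 2*(M:ℝ)^2*ε^2) := by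
      have h1 : 1 - (e:ℝ)*ε ≤ (1-ε)^e := hlo
      have h2 : (0:ℝ) ≤ ε*(e:ℝ) + 2*(M:ℝ)^2*ε^2 := by positivity
      have h3 : (1 - (e:ℝ)*ε) * (ε*(e:ℝ) + 2*(M:ℝ)^2*ε^2) ≤ (1-ε)^e * (ε*(e:ℝ) + 2*(M:ℝ)^2*ε^2) :=
        mul_le_mul_of_nonneg_right h1 h2
      have he2 : (e:ℝ)^2 ≤ (M:ℝ)^2 := by nlinarith
      have f1 : (e:ℝ)^2*ε^2 ≤ (M:ℝ)^2*ε^2 := mul_le_mul_of_nonneg_right he2 (sq_nonneg ε)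
      have heε : (e:ℝ)*ε ≤ 1/2 := by nlinarith
      have f2 : (2*(M:ℝ)^2*ε^2)*((e:ℝ)*ε) ≤ (2*(M:ℝ)^2*ε^2)*(1/2) :=
        mul_le_mul_of_nonneg_left heε (by positivity)
      nlinarith [h3, hlo, f1, f2]
    have := mul_le_mul_of_nonneg_left hcore hxb
    rw [pow_add]
    push_cast
    nlinarith [this, mul_le_mul_of_nonneg_left hcore hxb]

lemma untop'_natCast (a : ℕ) : (WithTop.untopD 0 (a:ℕ∞)) = a := rfl

lemma exists_natCast_eq (w : ℕ∞) (h : w ≠ ⊤) : ∃ a : ℕ, w = (a:ℕ∞) := by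
  lift w to ℕ using h with a; exact ⟨a, rfl⟩

lemma expWeight_mem (ε : ℝ) (h0 : 0 ≤ ε) (h1 : ε ≤ 1) (w : ℕ∞) :
    0 ≤ expWeight ε w ∧ expWeight ε w ≤ 1 := by
  unfold expWeight
  split
  · norm_num
  · have hx0 : 0 ≤ 1 - ε := by linarith
    have h := pow_le_one₀ hx0 (by linarith : 1 - ε ≤ 1) (n := WithTop.untopD 0 w)
    have h' : 0 ≤ (1-ε)^(WithTop.untopD 0 w) := pow_nonneg hx0 _
    constructor <;> linarith
theorem generator_exponential_submartingale
    {S : Type*} [Countable S]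
    (q : S → S → ℝ) (hq : ∀ η η', 0 ≤ q η η')
    (R : ℝ) (hR : 0 < R)
    (hsummable : ∀ η, Summable (q η))
    (hrate : ∀ η, ∑' η', q η η' ≤ R)
    (W : S → ℕ∞) (M : ℕ) (hM : 1 ≤ M)
    (hjump : ∀ η η', 0 < q η η' → W η' ≤ W η + M ∧ W η ≤ W η' + M)
    (C : Set S) (c : ℝ) (hc : 0 < c)
    (hdrift : ∀ η ∈ C, W η ≠ ⊤ →
      c ≤ ∑' η', q η η' * (weightReal (W η') - weightReal (W η))) :
    ∃ ε : ℝ, 0 < ε ∧ ε < 1 ∧ ∀ η ∈ C, W η ≠ ⊤ →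
      0 ≤ ∑' η', q η η' * (expWeight ε (W η') - expWeight ε (W η)) := by
  have hM1 : (1:ℝ) ≤ M := by exact_mod_cast hM
  have hM0 : (0:ℝ) < M := by linarith
  set ε : ℝ := min (1/(2*M)) (c/(2*M^2*R)) with hεdef
  have hε0 : 0 < ε := lt_min (by positivity) (by positivity)
  have hεa : ε ≤ 1/(2*M) := min_le_left _ _
  have hεb : ε ≤ c/(2*M^2*R) := min_le_right _ _
  have hε2M : ε * (2*M) ≤ 1 := by
    rw [le_div_iff₀ (by positivity)] at hεa; linarith
  have hε1 : ε ≤ 1 := by nlinarith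
  have hεRc : 2*(M:ℝ)^2*ε*R ≤ c := by
    rw [le_div_iff₀ (by positivity)] at hεb; linarith
  refine ⟨ε, hε0, by nlinarith, ?_⟩
  intro η hη hWη
  obtain ⟨a, ha⟩ := exists_natCast_eq (W η) hWη
  have hx : 0 ≤ 1 - ε := by linarith
  have hxa : 0 ≤ (1-ε)^a := pow_nonneg hx a
  set g : S → ℝ := fun η' => q η η' * (weightReal (W η') - weightReal (W η)) with hg
  set f : S → ℝ := fun η' => q η η' * (expWeight ε (W η') - expWeight ε (W η)) with hf
  -- pointwise bounds and key inequality
  have hpoint : ∀ η', (1-ε)^a * (ε * g η' - 2*(M:ℝ)^2*ε^2 * q η η') ≤ f η' ∧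
      |g η'| ≤ (M:ℝ) * q η η' := by
    intro η'
    by_cases hq0 : q η η' = 0
    · simp [hg, hf, hq0]
    · have hqpos : 0 < q η η' := (hq η η').lt_of_ne (Ne.symm hq0)
      obtain ⟨hj1, hj2⟩ := hjump η η' hqpos
      have hfin : W η + (M:ℕ∞) ≠ ⊤ :=
        WithTop.add_ne_top.mpr ⟨hWη, by exact_mod_cast WithTop.coe_ne_top⟩
      have hWη' : W η' ≠ ⊤ := fun h => hfin (top_le_iff.mp (h ▸ hj1))
      obtain ⟨b, hb⟩ := exists_natCast_eq (W η') hWη'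
      rw [ha, hb] at hj1 hj2
      have hab : b ≤ a + M := by exact_mod_cast hj1
      have hba : a ≤ b + M := by exact_mod_cast hj2
      have e1 : expWeight ε (W η') = 1 - (1-ε)^b := by
        rw [hb]; simp [expWeight, untop'_natCast]
      have e2 : expWeight ε (W η) = 1 - (1-ε)^a := by
        rw [ha]; simp [expWeight, untop'_natCast]
      have w1 : weightReal (W η') = (b:ℝ) := by rw [hb]; simp [weightReal, untop'_natCast]
      have w2 : weightReal (W η) = (a:ℝ) := by rw [ha]; simp [weightReal, untop'_natCast]
      have hkey := key_ineq M hM ε hε0 hε2M a b hab hba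
      constructor
      · simp only [hf, hg, e1, e2, w1, w2]
        have := mul_le_mul_of_nonneg_left hkey hqpos.le
        nlinarith [this]
      · simp only [hg, w1, w2]
        rw [abs_mul, abs_of_nonneg hqpos.le]
        have : |(b:ℝ) - a| ≤ M := by
          rw [abs_sub_le_iff]
          constructor <;> [skip; skip] <;>
          · push_cast [← Nat.cast_le (α := ℝ)] at hab hba ⊢ <;> linarith
        nlinarith [this]
  -- summability
  have hMq : Summable (fun η' => (M:ℝ) * q η η') := (hsummable η).mul_left _
  have hgsum : Summable g :=
    Summable.of_abs (Summable.of_nonneg_of_le (fun _ => abs_nonneg _)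
      (fun η' => (hpoint η').2) hMq)
  have hfbound : ∀ η', |f η'| ≤ (M:ℝ) * q η η' := by
    intro η'
    rw [hf]
    simp only []
    rw [abs_mul, abs_of_nonneg (hq η η')]
    have h1 := expWeight_mem ε hε0.le hε1 (W η')
    have h2 := expWeight_mem ε hε0.le hε1 (W η)
    have hd1 : |expWeight ε (W η') - expWeight ε (W η)| ≤ 1 := by
      rw [abs_sub_le_iff]; constructor <;> linarith [h1.1, h1.2, h2.1, h2.2]
    nlinarith [hq η η', hd1]
  have hfsum : Summable f :=
    Summable.of_abs (Summable.of_nonneg_of_le (fun _ => abs_nonneg _) hfbound hMq)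
  have hLsum1 : Summable (fun η' => ε * g η' - 2*(M:ℝ)^2*ε^2 * q η η') :=
    (hgsum.mul_left ε).sub ((hsummable η).mul_left _)
  -- main computation
  have hT : c ≤ ∑' η', g η' := hdrift η hη hWη
  have hQ0 : 0 ≤ ∑' η', q η η' := tsum_nonneg (hq η)
  have hQ : ∑' η', q η η' ≤ R := hrate η
  calc (0:ℝ) ≤ (1-ε)^a * (ε * (∑' η', g η') - 2*(M:ℝ)^2*ε^2 * (∑' η', q η η')) := by
        apply mul_nonneg hxa
        have h1 : ε * c ≤ ε * (∑' η', g η') := mul_le_mul_of_nonneg_left hT hε0.le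
        have h2 : 2*(M:ℝ)^2*ε^2 * (∑' η', q η η') ≤ 2*(M:ℝ)^2*ε^2 * R :=
          mul_le_mul_of_nonneg_left hQ (by positivity)
        nlinarith [h1, h2, mul_le_mul_of_nonneg_left hεRc hε0.le]
    _ = ∑' η', (1-ε)^a * (ε * g η' - 2*(M:ℝ)^2*ε^2 * q η η') := by
        rw [tsum_mul_left, Summable.tsum_sub (hgsum.mul_left ε) ((hsummable η).mul_left _),
          tsum_mul_left, tsum_mul_left]
    _ ≤ ∑' η', f η' := Summable.tsum_le_tsum (fun η' => (hpoint η').1) (hLsum1.mul_left _) hfsum
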